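/- Let N : ℝ → ℝ be differentiable, q : ℝ → ℝ differentiable with q'(s) = N(q(s)) for all s, and let (σ, ρ) be an extremal on an open interval I, i.e. σ'' = (1/2)·N'(q(σ))·(ρ'² − σ'²) and ρ'' = −N'(q(σ))·σ'·ρ' on I. Fix t₀ ∈ I and set C₀ = −N(q(σ(t₀)))·(σ'(t₀)² + ρ'(t₀)²) and C₁ = −N(q(σ(t₀)))·ρ'(t₀), and assume C₁ ≠ 0; set C₂ = C₀/C₁². Then for every t ∈ I: σ'(t)² = ρ'(t)² · (−1 − C₂·N(q(σ(t)))). (This is the trajectory equation (dρ/dσ)² = 1/(−1 − C₂N) for extremals of general type.) -/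

import Mathlib

/-- Constancy on an open preconnected set from zero derivative. -/
lemma my_const_aux {f : ℝ → ℝ} {s : Set ℝ} (hs : IsOpen s) (hc : IsPreconnected s)
    (hf : ∀ x ∈ s, HasDerivAt f 0 x) {x y : ℝ} (hx : x ∈ s) (hy : y ∈ s) :
    f x = f y := by
  apply hc.convex.is_const_of_fderivWithin_eq_zero
    (fun z hz => ((hf z hz).differentiableAt).differentiableWithinAt) _ hx hy
  intro z hz
  rw [fderivWithin_of_isOpen hs hz, (hf z hz).hasFDerivAt.fderiv]
  ext; simp

/-- Along an extremal of the metric `ds² = -N(q)(dσ² + dρ²)` with first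
integrals `C₀ = -N(q(σ))(σ'² + ρ'²)` and `C₁ = -N(q(σ))ρ' ≠ 0` evaluated at a
base point `t₀`, and `C₂ = C₀/C₁²`, the trajectory equation
`σ'² = ρ'²·(-1 - C₂·N(q(σ)))` holds at every point of the interval
(the equation `(dρ/dσ)² = 1/(-1 - C₂N)` for extremals of general type). -/
theorem trajectory_equation_general_type
    (N q σ ρ : ℝ → ℝ) (I : Set ℝ) (hIopen : IsOpen I) (hIconn : IsPreconnected I)
    (hN : Differentiable ℝ N)
    (hq : Differentiable ℝ q) (hq' : ∀ s, deriv q s = N (q s))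
    (hσ : ∀ t ∈ I, DifferentiableAt ℝ σ t)
    (hσ' : ∀ t ∈ I, DifferentiableAt ℝ (deriv σ) t)
    (hρ : ∀ t ∈ I, DifferentiableAt ℝ ρ t)
    (hρ' : ∀ t ∈ I, DifferentiableAt ℝ (deriv ρ) t)
    (hext1 : ∀ t ∈ I, deriv (deriv σ) t
      = (1 / 2) * deriv N (q (σ t)) * ((deriv ρ t) ^ 2 - (deriv σ t) ^ 2))
    (hext2 : ∀ t ∈ I, deriv (deriv ρ) t
      = -(deriv N (q (σ t)) * deriv σ t * deriv ρ t))
    (t₀ : ℝ) (ht₀ : t₀ ∈ I) (C₀ C₁ : ℝ)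
    (hC₀ : C₀ = -(N (q (σ t₀))) * ((deriv σ t₀) ^ 2 + (deriv ρ t₀) ^ 2))
    (hC₁ : C₁ = -(N (q (σ t₀))) * deriv ρ t₀)
    (hC₁ne : C₁ ≠ 0) :
    ∀ t ∈ I, (deriv σ t) ^ 2
      = (deriv ρ t) ^ 2 * (-1 - (C₀ / C₁ ^ 2) * N (q (σ t))) := by
  -- derivative of F t = N (q (σ t))
  have hF : ∀ t ∈ I, HasDerivAt (fun t => N (q (σ t)))
      (deriv N (q (σ t)) * N (q (σ t)) * deriv σ t) t := by
    intro t ht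
    have hqc : HasDerivAt q (N (q (σ t))) (σ t) := by
      have := (hq (σ t)).hasDerivAt
      rwa [hq'] at this
    have := ((hN (q (σ t))).hasDerivAt.comp (σ t) hqc).comp t (hσ t ht).hasDerivAt
    exact this
  -- C₁ conserved
  have hg : ∀ t ∈ I, -(N (q (σ t))) * deriv ρ t = C₁ := by
    intro t ht
    rw [hC₁]
    apply my_const_aux hIopen hIconn _ ht ht₀
    intro x hx
    have := ((hF x hx).neg).mul (hρ' x hx).hasDerivAt
    refine this.congr_deriv ?_
    rw [hext2 x hx]; simp only [Pi.neg_apply]; ring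
  -- C₀ conserved
  have hh : ∀ t ∈ I, -(N (q (σ t))) * ((deriv σ t) ^ 2 + (deriv ρ t) ^ 2) = C₀ := by
    intro t ht
    rw [hC₀]
    apply my_const_aux hIopen hIconn _ ht ht₀
    intro x hx
    have := ((hF x hx).neg).mul
      (((hσ' x hx).hasDerivAt.pow 2).add ((hρ' x hx).hasDerivAt.pow 2))
    refine this.congr_deriv ?_
    rw [hext1 x hx, hext2 x hx]; simp only [Pi.neg_apply, Pi.add_apply, Pi.pow_apply]; ring
  intro t ht
  have hg1 := hg t ht
  have hh1 := hh t ht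
  have hFne : N (q (σ t)) ≠ 0 := by
    intro h0; apply hC₁ne; rw [← hg1, h0]; ring
  have hρne : deriv ρ t ≠ 0 := by
    intro h0; apply hC₁ne; rw [← hg1, h0]; ring
  have hC₁sq : C₁ ^ 2 = (N (q (σ t))) ^ 2 * (deriv ρ t) ^ 2 := by
    rw [← hg1]; ring
  field_simp [hC₁sq]
  linear_combination (-(deriv ρ t) ^ 2 * N (q (σ t))) * hh1 + ((deriv σ t) ^ 2 + (deriv ρ t) ^ 2) * hC₁sq
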